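/- Let A be a finite set, p a probability distribution on A, q : A → ℝ a vector, and M > 0 a constant such that max_{a,a'∈A} (q(a) - q(a')) ≤ M. Then (Σ_{a∈A} p(a)·exp(-q(a))²) / (Σ_{a∈A} p(a)·exp(-q(a)))² - 1 ≤ (exp(2M)/M²)·Σ_{a∈A} p(a)·q(a)². -/
import Mathlib

open Finset

lemma exp_tsum_tail (x : ℝ) :
    Real.exp x - 1 - x = ∑' n : ℕ, x ^ (n + 2) / ((n + 2).factorial : ℝ) := by
  have h1 : Real.exp x = ∑' n : ℕ, x ^ n / (n.factorial : ℝ) := by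
    rw [Real.exp_eq_exp_ℝ, NormedSpace.exp_eq_tsum_div]
  have h2 := Summable.sum_add_tsum_nat_add 2 (Real.summable_pow_div_factorial x)
  rw [h1, ← h2]
  simp [Finset.sum_range_succ, Nat.factorial]
  ring

set_option maxHeartbeats 1000000 in
lemma key_bound (c s : ℝ) (hc : 0 < c) (hs : |s| ≤ c) :
    Real.exp s - 1 - s ≤ Real.exp c * s ^ 2 / c ^ 2 := by
  have hsum_s : Summable (fun n : ℕ => s ^ (n + 2) / ((n + 2).factorial : ℝ)) :=
    (summable_nat_add_iff 2).mpr (Real.summable_pow_div_factorial s)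
  have hsum_c : Summable (fun n : ℕ => c ^ (n + 2) / ((n + 2).factorial : ℝ)) :=
    (summable_nat_add_iff 2).mpr (Real.summable_pow_div_factorial c)
  have hsum_m : Summable (fun n : ℕ => s ^ 2 / c ^ 2 * (c ^ (n + 2) / ((n + 2).factorial : ℝ))) :=
    hsum_c.mul_left _
  have hterm : ∀ n : ℕ, s ^ (n + 2) / ((n + 2).factorial : ℝ)
      ≤ s ^ 2 / c ^ 2 * (c ^ (n + 2) / ((n + 2).factorial : ℝ)) := by
    intro n
    have hfac : (0:ℝ) < ((n + 2).factorial : ℝ) := by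
      exact_mod_cast Nat.factorial_pos _
    have hkey : s ^ (n + 2) ≤ s ^ 2 * c ^ n := by
      calc s ^ (n + 2) ≤ |s ^ (n + 2)| := le_abs_self _
        _ = |s| ^ 2 * |s| ^ n := by rw [abs_pow]; ring
        _ ≤ |s| ^ 2 * c ^ n := by
            apply mul_le_mul_of_nonneg_left (pow_le_pow_left₀ (abs_nonneg s) hs n)
            positivity
        _ = s ^ 2 * c ^ n := by rw [sq_abs]
    have heq : s ^ 2 / c ^ 2 * (c ^ (n + 2) / ((n + 2).factorial : ℝ))
        = s ^ 2 * c ^ n / ((n + 2).factorial : ℝ) := by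
      field_simp
      ring
    rw [heq]
    exact div_le_div_of_nonneg_right hkey hfac.le
  have h1 : Real.exp s - 1 - s ≤ s ^ 2 / c ^ 2 * (Real.exp c - 1 - c) := by
    rw [exp_tsum_tail, exp_tsum_tail]
    rw [← hsum_c.tsum_mul_left (s ^ 2 / c ^ 2)]
    exact Summable.tsum_le_tsum hterm hsum_s hsum_m
  have h2 : s ^ 2 / c ^ 2 * (Real.exp c - 1 - c) ≤ s ^ 2 / c ^ 2 * Real.exp c := by
    apply mul_le_mul_of_nonneg_left _ (by positivity)
    nlinarith [hc]
  calc Real.exp s - 1 - s ≤ s ^ 2 / c ^ 2 * Real.exp c := h1.trans h2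
    _ = Real.exp c * s ^ 2 / c ^ 2 := by ring

theorem stmt0 {A : Type*} [Fintype A] [Nonempty A]
    (p : A → ℝ) (hp0 : ∀ a, 0 ≤ p a) (hp1 : ∑ a, p a = 1)
    (q : A → ℝ) (M : ℝ) (hM : 0 < M)
    (hq : ∀ a a', q a - q a' ≤ M) :
    (∑ a, p a * Real.exp (-q a) ^ 2) / (∑ a, p a * Real.exp (-q a)) ^ 2 - 1
      ≤ Real.exp (2 * M) / M ^ 2 * ∑ a, p a * q a ^ 2 := by
  set μ := ∑ a, p a * q a with hμ
  set S := ∑ a, p a * Real.exp (-q a) with hS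
  set T := ∑ a, p a * Real.exp (-q a) ^ 2 with hT
  -- Jensen-type: S ≥ exp(-μ)
  have hsum_tangent : ∑ a, p a * (Real.exp (-μ) * (1 + μ - q a)) = Real.exp (-μ) := by
    have he : ∀ a ∈ Finset.univ (α := A), p a * (Real.exp (-μ) * (1 + μ - q a))
        = Real.exp (-μ) * ((1 + μ) * p a) - Real.exp (-μ) * (p a * q a) :=
      fun a _ => by ring
    rw [Finset.sum_congr rfl he, Finset.sum_sub_distrib, ← Finset.mul_sum, ← Finset.mul_sum,
      ← Finset.mul_sum, hp1, ← hμ]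
    ring
  have hJ : Real.exp (-μ) ≤ S := by
    rw [← hsum_tangent]
    apply Finset.sum_le_sum
    intro a _
    apply mul_le_mul_of_nonneg_left _ (hp0 a)
    have h := Real.add_one_le_exp (μ - q a)
    calc Real.exp (-μ) * (1 + μ - q a) = Real.exp (-μ) * ((μ - q a) + 1) := by ring
      _ ≤ Real.exp (-μ) * Real.exp (μ - q a) :=
          mul_le_mul_of_nonneg_left h (Real.exp_nonneg _)
      _ = Real.exp (-q a) := by rw [← Real.exp_add]; ring_nf
  have hSpos : 0 < S := lt_of_lt_of_le (Real.exp_pos _) hJ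
  have hTnn : 0 ≤ T := Finset.sum_nonneg fun a _ => mul_nonneg (hp0 a) (by positivity)
  -- step 1: T / S^2 ≤ T / exp(-μ)^2
  have step1 : T / S ^ 2 ≤ T / Real.exp (-μ) ^ 2 := by
    apply div_le_div_of_nonneg_left hTnn (pow_pos (Real.exp_pos _) 2)
    exact pow_le_pow_left₀ (Real.exp_nonneg _) hJ 2
  have step2 : T / Real.exp (-μ) ^ 2 = ∑ a, p a * Real.exp (2 * (μ - q a)) := by
    rw [hT, Finset.sum_div]
    apply Finset.sum_congr rfl
    intro a _
    rw [mul_div_assoc, ← div_pow, ← Real.exp_sub, sq, ← Real.exp_add]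
    congr 2
    ring
  -- recentring: subtract 1 and the mean
  have key3 : (∑ a, p a * Real.exp (2 * (μ - q a))) - 1
      = ∑ a, p a * (Real.exp (2 * (μ - q a)) - 1 - 2 * (μ - q a)) := by
    have he : ∀ a ∈ Finset.univ (α := A),
        p a * (Real.exp (2 * (μ - q a)) - 1 - 2 * (μ - q a))
        = p a * Real.exp (2 * (μ - q a)) - (1 + 2 * μ) * p a + 2 * (p a * q a) :=
      fun a _ => by ring
    rw [Finset.sum_congr rfl he, Finset.sum_add_distrib, Finset.sum_sub_distrib,
      ← Finset.mul_sum, ← Finset.mul_sum, hp1, ← hμ]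
    ring
  -- pointwise bounds
  have habs : ∀ a, |2 * (μ - q a)| ≤ 2 * M := by
    intro a
    rw [abs_le]
    have h1 : μ - q a ≤ M := by
      have : μ - q a = ∑ a', p a' * (q a' - q a) := by
        rw [Finset.sum_congr rfl (fun a' _ => by ring : ∀ a' ∈ Finset.univ (α := A),
          p a' * (q a' - q a) = p a' * q a' - q a * p a'), Finset.sum_sub_distrib,
          ← Finset.mul_sum, hp1, ← hμ]
        ring
      rw [this]
      calc ∑ a', p a' * (q a' - q a) ≤ ∑ a', p a' * M :=
            Finset.sum_le_sum fun a' _ => mul_le_mul_of_nonneg_left (hq a' a) (hp0 a')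
        _ = M := by rw [← Finset.sum_mul, hp1, one_mul]
    have h2 : q a - μ ≤ M := by
      have : q a - μ = ∑ a', p a' * (q a - q a') := by
        rw [Finset.sum_congr rfl (fun a' _ => by ring : ∀ a' ∈ Finset.univ (α := A),
          p a' * (q a - q a') = q a * p a' - p a' * q a'), Finset.sum_sub_distrib,
          ← Finset.mul_sum, hp1, ← hμ]
        ring
      rw [this]
      calc ∑ a', p a' * (q a - q a') ≤ ∑ a', p a' * M :=
            Finset.sum_le_sum fun a' _ => mul_le_mul_of_nonneg_left (hq a a') (hp0 a')
        _ = M := by rw [← Finset.sum_mul, hp1, one_mul]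
    constructor <;> linarith
  have hpt : ∀ a, p a * (Real.exp (2 * (μ - q a)) - 1 - 2 * (μ - q a))
      ≤ p a * (Real.exp (2 * M) * (μ - q a) ^ 2 / M ^ 2) := by
    intro a
    apply mul_le_mul_of_nonneg_left _ (hp0 a)
    have h := key_bound (2 * M) (2 * (μ - q a)) (by linarith) (habs a)
    have heq : Real.exp (2 * M) * (2 * (μ - q a)) ^ 2 / (2 * M) ^ 2
        = Real.exp (2 * M) * (μ - q a) ^ 2 / M ^ 2 := by
      rw [mul_pow, mul_pow]
      rw [show Real.exp (2 * M) * ((2:ℝ) ^ 2 * (μ - q a) ^ 2) = (2:ℝ) ^ 2 *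
        (Real.exp (2 * M) * (μ - q a) ^ 2) from by ring, mul_div_mul_left]
      norm_num
    rw [← heq]
    exact h
  -- variance bound
  have hvar : ∑ a, p a * (μ - q a) ^ 2 ≤ ∑ a, p a * q a ^ 2 := by
    have he : ∀ a ∈ Finset.univ (α := A), p a * (μ - q a) ^ 2
        = p a * q a ^ 2 + μ ^ 2 * p a - 2 * μ * (p a * q a) :=
      fun a _ => by ring
    rw [Finset.sum_congr rfl he, Finset.sum_sub_distrib, Finset.sum_add_distrib,
      ← Finset.mul_sum, ← Finset.mul_sum, hp1, ← hμ]
    nlinarith [sq_nonneg μ]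
  calc T / S ^ 2 - 1 ≤ (∑ a, p a * Real.exp (2 * (μ - q a))) - 1 := by
        rw [← step2]; linarith
    _ = ∑ a, p a * (Real.exp (2 * (μ - q a)) - 1 - 2 * (μ - q a)) := key3
    _ ≤ ∑ a, p a * (Real.exp (2 * M) * (μ - q a) ^ 2 / M ^ 2) :=
        Finset.sum_le_sum fun a _ => hpt a
    _ = Real.exp (2 * M) / M ^ 2 * ∑ a, p a * (μ - q a) ^ 2 := by
        rw [Finset.mul_sum]
        exact Finset.sum_congr rfl fun a _ => by ring
    _ ≤ Real.exp (2 * M) / M ^ 2 * ∑ a, p a * q a ^ 2 :=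
        mul_le_mul_of_nonneg_left hvar (by positivity)
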